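/- Expander mixing lemma for bipartite graphs: if G is a connected Δ-regular bipartite graph on parts V_0 ∪ V_1, then for any S ⊆ V_0 and T ⊆ V_1, the number of edges between S and T satisfies |E(S,T)| ≤ (Δ/|V_0|)·|S|·|T| + λ(G)·√(|S|·|T|). -/

import Mathlib

open Finset Matrix SimpleGraph

/-- In a connected Δ-regular graph, any eigenvector for eigenvalue Δ is constant. -/
lemma eigen_top_const {V : Type*} [Fintype V] [DecidableEq V]
    (G : SimpleGraph V) [DecidableRel G.Adj] (Δ : ℕ)
    (hreg : ∀ v, G.degree v = Δ) (hconn : G.Connected)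
    (x : V → ℝ) (hx : G.adjMatrix ℝ *ᵥ x = (Δ : ℝ) • x) :
    ∀ v w, x v = x w := by
  haveI : Nonempty V := hconn.nonempty
  obtain ⟨v0, -, hmax⟩ := Finset.exists_max_image Finset.univ x ⟨Classical.arbitrary V, mem_univ _⟩
  have key : ∀ v, x v = x v0 → ∀ u, G.Adj v u → x u = x v0 := by
    intro v hv u hu
    have h1 : ∑ w ∈ G.neighborFinset v, x w = (Δ : ℝ) * x v0 := by
      have := congrFun hx v
      simpa [hv] using this
    have h2 : ∑ w ∈ G.neighborFinset v, (x v0 - x w) = 0 := by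
      rw [Finset.sum_sub_distrib, h1, Finset.sum_const, card_neighborFinset_eq_degree, hreg,
        nsmul_eq_mul, sub_self]
    have h3 := (Finset.sum_eq_zero_iff_of_nonneg (fun w _ => by
      have := hmax w (mem_univ w); linarith)).1 h2
    have := h3 u (by rwa [SimpleGraph.mem_neighborFinset])
    linarith
  have walk : ∀ (u w : V) (p : G.Walk u w), x u = x v0 → x w = x v0 := by
    intro u w p
    induction p with
    | nil => exact id
    | cons h p ih => intro ha; exact ih (key _ ha _ h)
  have main : ∀ v, x v = x v0 := fun v =>
    (hconn.preconnected v0 v).elim fun p => walk _ _ p rfl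
  intro v w; rw [main v, main w]

/-- Eigenvalues of the adjacency matrix of a Δ-regular graph are bounded by Δ. -/
lemma eigen_abs_le {V : Type*} [Fintype V] [DecidableEq V]
    (G : SimpleGraph V) [DecidableRel G.Adj] (Δ : ℕ) (hreg : ∀ v, G.degree v = Δ)
    (μ : ℝ) (x : V → ℝ) (hx0 : x ≠ 0) (hx : G.adjMatrix ℝ *ᵥ x = μ • x) :
    |μ| ≤ (Δ : ℝ) := by
  haveI : Nonempty V := by
    by_contra h
    exact hx0 (funext fun v => absurd ⟨v⟩ h)
  obtain ⟨v0, -, hmax⟩ := Finset.exists_max_image Finset.univ (fun v => |x v|)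
    ⟨Classical.arbitrary V, mem_univ _⟩
  have hpos : 0 < |x v0| := by
    rcases Function.ne_iff.1 hx0 with ⟨v, hv⟩
    have := hmax v (mem_univ v)
    have : 0 < |x v| := abs_pos.2 hv
    linarith [hmax v (mem_univ v)]
  have h1 : |μ| * |x v0| ≤ (Δ : ℝ) * |x v0| := by
    have h2 : μ * x v0 = ∑ w ∈ G.neighborFinset v0, x w := by
      have := congrFun hx v0
      simp at this; linarith [this]
    calc |μ| * |x v0| = |μ * x v0| := (abs_mul _ _).symm
      _ = |∑ w ∈ G.neighborFinset v0, x w| := by rw [h2]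
      _ ≤ ∑ w ∈ G.neighborFinset v0, |x w| := Finset.abs_sum_le_sum_abs _ _
      _ ≤ ∑ w ∈ G.neighborFinset v0, |x v0| := Finset.sum_le_sum fun w _ => hmax w (mem_univ w)
      _ = (Δ : ℝ) * |x v0| := by
          rw [Finset.sum_const, card_neighborFinset_eq_degree, hreg, nsmul_eq_mul]
  exact le_of_mul_le_mul_right h1 hpos

theorem bipartite_expander_mixing {V0 V1 : Type*}
    [Fintype V0] [Fintype V1] [DecidableEq V0] [DecidableEq V1]
    (hcard : Fintype.card V0 = Fintype.card V1)
    (G : SimpleGraph (V0 ⊕ V1)) [DecidableRel G.Adj]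
    (hbip : ∀ u v : V0 ⊕ V1, G.Adj u v →
      (u.isLeft ∧ v.isRight) ∨ (u.isRight ∧ v.isLeft))
    (Δ : ℕ) (hreg : ∀ v, G.degree v = Δ)
    (hconn : G.Connected)
    (hH : (G.adjMatrix ℝ).IsHermitian)
    (lam : ℝ)
    (hlam : lam = sSup {r : ℝ | ∃ i : V0 ⊕ V1,
      hH.eigenvalues i ≠ (Δ : ℝ) ∧ hH.eigenvalues i ≠ -(Δ : ℝ) ∧
        r = |hH.eigenvalues i|})
    (S : Finset V0) (T : Finset V1) :
    (((S ×ˢ T).filter fun p => G.Adj (Sum.inl p.1) (Sum.inr p.2)).card : ℝ) ≤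
      (Δ : ℝ) / (Fintype.card V0) * S.card * T.card +
        lam * Real.sqrt ((S.card : ℝ) * T.card) := by
  classical
  haveI hNE : Nonempty (V0 ⊕ V1) := hconn.nonempty
  haveI hV0 : Nonempty V0 := by
    rcases Classical.arbitrary (V0 ⊕ V1) with a | b
    · exact ⟨a⟩
    · have h1 : 0 < Fintype.card V1 := Fintype.card_pos_iff.2 ⟨b⟩
      exact Fintype.card_pos_iff.1 (by omega)
  set n := Fintype.card V0 with hn
  have hnpos : 0 < n := Fintype.card_pos
  have hnR : (0:ℝ) < (n:ℝ) := by exact_mod_cast hnpos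
  have hN2 : Fintype.card (V0 ⊕ V1) = 2 * n := by
    rw [Fintype.card_sum, ← hcard]; ring
  set A := G.adjMatrix ℝ with hA
  set P := (hH.eigenvectorUnitary : Matrix (V0 ⊕ V1) (V0 ⊕ V1) ℝ) with hPdef
  set μ := hH.eigenvalues with hμ
  set x : V0 ⊕ V1 → ℝ := Sum.elim (fun a => if a ∈ S then 1 else 0) (fun _ => 0) with hxdef
  set y : V0 ⊕ V1 → ℝ := Sum.elim (fun _ => 0) (fun b => if b ∈ T then 1 else 0) with hydef
  set a : (V0 ⊕ V1) → ℝ := x ᵥ* P with hadef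
  set b : (V0 ⊕ V1) → ℝ := y ᵥ* P with hbdef
  -- star P = Pᵀ over ℝ
  have hstar : star P = Pᵀ := by
    ext i j
    simp [Matrix.star_apply]
  have hPPt : P * Pᵀ = 1 := by
    rw [← hstar]
    exact (Matrix.mem_unitaryGroup_iff).mp hH.eigenvectorUnitary.2
  have hPtP : Pᵀ * P = 1 := by
    rw [← hstar]
    exact Matrix.UnitaryGroup.star_mul_self hH.eigenvectorUnitary
  have hspec : A = P * Matrix.diagonal μ * Pᵀ := by
    rw [← hstar]
    have := hH.spectral_theorem
    simpa using this
  -- entry formulas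
  have ha_apply : ∀ i, a i = ∑ v, x v * P v i := by
    intro i; rfl
  have hb_apply : ∀ i, b i = ∑ v, y v * P v i := by
    intro i; rfl
  -- columns are eigenvectors
  have hcol : ∀ i, A *ᵥ (fun v => P v i) = μ i • (fun v => P v i) := by
    intro i
    exact hH.mulVec_eigenvectorBasis i
  -- orthonormality
  have hnorm1 : ∀ i, ∑ v, P v i * P v i = 1 := by
    intro i
    have := congrFun (congrFun hPtP i) i
    simpa [Matrix.mul_apply, Matrix.one_apply] using this
  have horth : ∀ i j, i ≠ j → ∑ v, P v i * P v j = 0 := by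
    intro i j hij
    have := congrFun (congrFun hPtP i) j
    simpa [Matrix.mul_apply, Matrix.one_apply, hij] using this
  have hcolne : ∀ i, (fun v => P v i) ≠ 0 := by
    intro i h0
    have h1 := hnorm1 i
    have h2 : ∀ v, P v i = 0 := fun v => congrFun h0 v
    simp [h2] at h1
  -- counting
  have hcount : (((S ×ˢ T).filter fun p => G.Adj (Sum.inl p.1) (Sum.inr p.2)).card : ℝ)
      = x ⬝ᵥ (A *ᵥ y) := by
    rw [Finset.card_filter]
    push_cast [apply_ite (Nat.cast : ℕ → ℝ)]
    rw [Finset.sum_product]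
    simp only [hA, dotProduct, Matrix.mulVec, SimpleGraph.adjMatrix_apply,
      Fintype.sum_sum_type, hxdef, hydef, Sum.elim_inl, Sum.elim_inr, mul_zero, zero_mul,
      Finset.sum_const_zero, add_zero, zero_add, mul_ite, mul_one, ite_mul, one_mul]
    simp only [ite_self, Finset.sum_const_zero, zero_add]
    rw [Fintype.sum_ite_mem]
    refine Finset.sum_congr rfl fun aa _ => ?_
    have hswap : ∀ b1 : V1, (if G.Adj (Sum.inl aa) (Sum.inr b1) then
        if b1 ∈ T then (1:ℝ) else 0 else 0)
        = (if b1 ∈ T then (if G.Adj (Sum.inl aa) (Sum.inr b1) then (1:ℝ) else 0) else 0) :=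
      fun b1 => by split_ifs <;> rfl
    simp only [hswap]
    rw [Fintype.sum_ite_mem]
  -- expansion
  have hexp : x ⬝ᵥ (A *ᵥ y) = ∑ i, μ i * (a i * b i) := by
    rw [hspec, ← Matrix.mulVec_mulVec, ← Matrix.mulVec_mulVec, Matrix.mulVec_transpose,
      Matrix.dotProduct_mulVec]
    rw [← hbdef, ← hadef]
    simp only [dotProduct, Matrix.mulVec_diagonal]
    exact Finset.sum_congr rfl fun i _ => by ring
  -- Parseval
  have hsum_x : ∑ v, x v * x v = (S.card : ℝ) := by
    simp only [hxdef, Fintype.sum_sum_type, Sum.elim_inl, Sum.elim_inr, mul_zero,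
      Finset.sum_const_zero, add_zero, ite_mul, one_mul, zero_mul, if_pos, mul_one]
    simp [Finset.sum_ite_mem]
  have hsum_y : ∑ v, y v * y v = (T.card : ℝ) := by
    simp only [hydef, Fintype.sum_sum_type, Sum.elim_inl, Sum.elim_inr, mul_zero,
      Finset.sum_const_zero, zero_add, ite_mul, one_mul, zero_mul, mul_one]
    simp [Finset.sum_ite_mem]
  have hPP_dot : ∀ z : V0 ⊕ V1 → ℝ, (z ᵥ* P) ⬝ᵥ (z ᵥ* P) = z ⬝ᵥ z := by
    intro z
    nth_rewrite 2 [← Matrix.mulVec_transpose]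
    rw [Matrix.dotProduct_mulVec, Matrix.vecMul_vecMul, hPPt, Matrix.vecMul_one]
  have hParx : ∑ i, a i ^ 2 = (S.card : ℝ) := by
    have h1 := hPP_dot x
    rw [← hadef] at h1
    simp only [dotProduct] at h1
    rw [← hsum_x, ← h1]
    exact Finset.sum_congr rfl fun i _ => by rw [sq]
  have hPary : ∑ i, b i ^ 2 = (T.card : ℝ) := by
    have h1 := hPP_dot y
    rw [← hbdef] at h1
    simp only [dotProduct] at h1
    rw [← hsum_y, ← h1]
    exact Finset.sum_congr rfl fun i _ => by rw [sq]
  set K := (Δ : ℝ) * S.card * T.card / (2 * n) with hK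
  have hKnn : 0 ≤ K := by
    apply div_nonneg
    · exact mul_nonneg (mul_nonneg (Nat.cast_nonneg _) (Nat.cast_nonneg _)) (Nat.cast_nonneg _)
    · positivity
  have hcompute : ∀ (i : V0 ⊕ V1) (c d : ℝ),
      (∀ aa : V0, P (Sum.inl aa) i = c) → (∀ bb : V1, P (Sum.inr bb) i = d) →
      a i = S.card * c ∧ b i = T.card * d ∧ (n:ℝ)*(c*c) + (n:ℝ)*(d*d) = 1 := by
    intro i c d hc hd
    refine ⟨?_, ?_, ?_⟩
    · rw [ha_apply, Fintype.sum_sum_type]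
      simp only [hxdef, Sum.elim_inl, Sum.elim_inr, zero_mul, Finset.sum_const_zero,
        add_zero, hc, ite_mul, one_mul]
      rw [Fintype.sum_ite_mem, Finset.sum_const, nsmul_eq_mul]
    · rw [hb_apply, Fintype.sum_sum_type]
      simp only [hydef, Sum.elim_inl, Sum.elim_inr, zero_mul, Finset.sum_const_zero,
        zero_add, hd, ite_mul, one_mul]
      rw [Fintype.sum_ite_mem, Finset.sum_const, nsmul_eq_mul]
    · have h1 := hnorm1 i
      rw [Fintype.sum_sum_type] at h1
      simp only [hc, hd, Finset.sum_const, nsmul_eq_mul, Finset.card_univ] at h1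
      rw [← hn, ← hcard] at h1
      exact h1
  have horthc : ∀ (i j : V0 ⊕ V1) (ci di cj dj : ℝ), i ≠ j →
      (∀ aa : V0, P (Sum.inl aa) i = ci) → (∀ bb : V1, P (Sum.inr bb) i = di) →
      (∀ aa : V0, P (Sum.inl aa) j = cj) → (∀ bb : V1, P (Sum.inr bb) j = dj) →
      (n:ℝ)*(ci*cj) + (n:ℝ)*(di*dj) = 0 := by
    intro i j ci di cj dj hij hci hdi hcj hdj
    have h1 := horth i j hij
    rw [Fintype.sum_sum_type] at h1
    simp only [hci, hdi, hcj, hdj, Finset.sum_const, nsmul_eq_mul, Finset.card_univ] at h1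
    rw [← hn, ← hcard] at h1
    exact h1
  have hstructP : ∀ i, μ i = (Δ:ℝ) → ∃ c : ℝ, (∀ aa : V0, P (Sum.inl aa) i = c) ∧
      (∀ bb : V1, P (Sum.inr bb) i = c) := by
    intro i hi
    have hconst := eigen_top_const G Δ hreg hconn (fun v => P v i) (by rw [← hi]; exact hcol i)
    obtain ⟨a0⟩ := hV0
    exact ⟨P (Sum.inl a0) i, fun aa => hconst _ _, fun bb => hconst _ _⟩
  have hstructM : ∀ i, μ i = -(Δ:ℝ) → ∃ c : ℝ, (∀ aa : V0, P (Sum.inl aa) i = c) ∧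
      (∀ bb : V1, P (Sum.inr bb) i = -c) := by
    intro i hi
    have hu : A *ᵥ (fun v => P v i) = -(Δ:ℝ) • (fun v => P v i) := by
      rw [← hi]; exact hcol i
    set z : V0 ⊕ V1 → ℝ :=
      fun v => (Sum.elim (fun _ : V0 => (1:ℝ)) (fun _ : V1 => (-1:ℝ)) v) * P v i with hz
    have hAz : A *ᵥ z = (Δ:ℝ) • z := by
      funext v
      have hAu := congrFun hu v
      simp only [Pi.smul_apply, smul_eq_mul] at hAu
      have hAuv : ∑ w ∈ G.neighborFinset v, P w i = -(Δ:ℝ) * P v i := by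
        rw [← hAu, hA]
        simp
      have hAzv : (A *ᵥ z) v = ∑ w ∈ G.neighborFinset v, z w := by
        rw [hA]
        simp
      rw [hAzv, Pi.smul_apply, smul_eq_mul]
      cases v with
      | inl aa =>
        have hnb : ∀ w ∈ G.neighborFinset (Sum.inl aa), z w = -(P w i) := by
          intro w hw
          rcases hbip _ _ ((SimpleGraph.mem_neighborFinset _ _ _).1 hw) with ⟨-, h2⟩ | ⟨h1, -⟩
          · cases w with
            | inl aa' => simp at h2
            | inr bb => simp [hz]
          · simp at h1
        rw [Finset.sum_congr rfl hnb, Finset.sum_neg_distrib, hAuv]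
        simp [hz]
      | inr bb =>
        have hnb : ∀ w ∈ G.neighborFinset (Sum.inr bb), z w = P w i := by
          intro w hw
          rcases hbip _ _ ((SimpleGraph.mem_neighborFinset _ _ _).1 hw) with ⟨h1, -⟩ | ⟨-, h2⟩
          · simp at h1
          · cases w with
            | inl aa' => simp [hz]
            | inr bb' => simp at h2
        rw [Finset.sum_congr rfl hnb, hAuv]
        simp [hz]
    have hconst := eigen_top_const G Δ hreg hconn z hAz
    obtain ⟨a0⟩ := hV0
    refine ⟨P (Sum.inl a0) i, fun aa => ?_, fun bb => ?_⟩
    · have h5 := hconst (Sum.inl aa) (Sum.inl a0)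
      simpa [hz] using h5
    · have h5 := hconst (Sum.inr bb) (Sum.inl a0)
      simp [hz] at h5
      linarith
  -- the +Δ part
  have hplus : ∀ F : Finset (V0 ⊕ V1), (∀ i ∈ F, μ i = (Δ:ℝ)) →
      ∑ i ∈ F, μ i * (a i * b i) ≤ K := by
    intro F hF
    have hval : ∀ i ∈ F, μ i * (a i * b i) = K := by
      intro i hi
      obtain ⟨c, hc, hd⟩ := hstructP i (hF i hi)
      obtain ⟨hai, hbi, hnrm⟩ := hcompute i c c hc hd
      have hc2 : c * c = 1 / (2*(n:ℝ)) := by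
        rw [eq_div_iff (by positivity)]
        ring_nf at hnrm ⊢
        linarith
      rw [hF i hi, hai, hbi, hK]
      have hstep : (Δ:ℝ) * ((S.card:ℝ) * c * ((T.card:ℝ) * c))
          = (Δ:ℝ) * S.card * T.card * (c * c) := by ring
      rw [hstep, hc2]
      ring
    have hcard1 : F.card ≤ 1 := by
      rw [Finset.card_le_one]
      intro i hi j hj
      by_contra hij
      obtain ⟨ci, hci, hdi⟩ := hstructP i (hF i hi)
      obtain ⟨cj, hcj, hdj⟩ := hstructP j (hF j hj)
      obtain ⟨-, -, hnrmi⟩ := hcompute i ci ci hci hdi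
      obtain ⟨-, -, hnrmj⟩ := hcompute j cj cj hcj hdj
      have ho := horthc i j ci ci cj cj hij hci hdi hcj hdj
      have hci0 : ci ≠ 0 := by
        intro h; rw [h] at hnrmi; simp at hnrmi
      have hcj0 : cj ≠ 0 := by
        intro h; rw [h] at hnrmj; simp at hnrmj
      have h20 : (2*(n:ℝ)) * (ci*cj) = 0 := by linarith
      rcases mul_eq_zero.mp h20 with h | h
      · have : (0:ℝ) < 2*(n:ℝ) := by positivity
        linarith
      · exact (mul_ne_zero hci0 hcj0) h
    calc ∑ i ∈ F, μ i * (a i * b i) = ∑ i ∈ F, K := Finset.sum_congr rfl hval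
      _ = F.card • K := Finset.sum_const K
      _ ≤ 1 * K := by
          rw [nsmul_eq_mul]
          exact mul_le_mul_of_nonneg_right (by exact_mod_cast hcard1) hKnn
      _ = K := one_mul K
  -- the -Δ part
  have hminus : ∀ F : Finset (V0 ⊕ V1), (∀ i ∈ F, μ i = -(Δ:ℝ)) →
      ∑ i ∈ F, μ i * (a i * b i) ≤ K := by
    intro F hF
    have hval : ∀ i ∈ F, μ i * (a i * b i) = K := by
      intro i hi
      obtain ⟨c, hc, hd⟩ := hstructM i (hF i hi)
      obtain ⟨hai, hbi, hnrm⟩ := hcompute i c (-c) hc hd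
      have hc2 : c * c = 1 / (2*(n:ℝ)) := by
        rw [eq_div_iff (by positivity)]
        ring_nf at hnrm ⊢
        linarith
      rw [hF i hi, hai, hbi, hK]
      have hstep : -(Δ:ℝ) * ((S.card:ℝ) * c * ((T.card:ℝ) * -c))
          = (Δ:ℝ) * S.card * T.card * (c * c) := by ring
      rw [hstep, hc2]
      ring
    have hcard1 : F.card ≤ 1 := by
      rw [Finset.card_le_one]
      intro i hi j hj
      by_contra hij
      obtain ⟨ci, hci, hdi⟩ := hstructM i (hF i hi)
      obtain ⟨cj, hcj, hdj⟩ := hstructM j (hF j hj)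
      obtain ⟨-, -, hnrmi⟩ := hcompute i ci (-ci) hci hdi
      obtain ⟨-, -, hnrmj⟩ := hcompute j cj (-cj) hcj hdj
      have ho := horthc i j ci (-ci) cj (-cj) hij hci hdi hcj hdj
      have hci0 : ci ≠ 0 := by
        intro h; rw [h] at hnrmi; simp at hnrmi
      have hcj0 : cj ≠ 0 := by
        intro h; rw [h] at hnrmj; simp at hnrmj
      have h20 : (2*(n:ℝ)) * (ci*cj) = 0 := by ring_nf at ho ⊢; linarith
      rcases mul_eq_zero.mp h20 with h | h
      · have : (0:ℝ) < 2*(n:ℝ) := by positivity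
        linarith
      · exact (mul_ne_zero hci0 hcj0) h
    calc ∑ i ∈ F, μ i * (a i * b i) = ∑ i ∈ F, K := Finset.sum_congr rfl hval
      _ = F.card • K := Finset.sum_const K
      _ ≤ 1 * K := by
          rw [nsmul_eq_mul]
          exact mul_le_mul_of_nonneg_right (by exact_mod_cast hcard1) hKnn
      _ = K := one_mul K
  -- the good part
  have hgood : ∀ F : Finset (V0 ⊕ V1), (∀ i ∈ F, μ i ≠ (Δ:ℝ) ∧ μ i ≠ -(Δ:ℝ)) →
      (∀ i, μ i ≠ (Δ:ℝ) → μ i ≠ -(Δ:ℝ) → i ∈ F) →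
      ∑ i ∈ F, μ i * (a i * b i) ≤ lam * Real.sqrt ((S.card : ℝ) * T.card) := by
    intro F hF hFfull
    rcases Finset.eq_empty_or_nonempty F with hemp | ⟨i0, hi0⟩
    · rw [hemp, Finset.sum_empty]
      have hset : {r : ℝ | ∃ i, μ i ≠ (Δ:ℝ) ∧ μ i ≠ -(Δ:ℝ) ∧ r = |μ i|} = ∅ := by
        ext r
        simp only [Set.mem_setOf_eq, Set.mem_empty_iff_false, iff_false, not_exists]
        rintro i ⟨h1, h2, -⟩
        have hmem := hFfull i h1 h2
        rw [hemp] at hmem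
        simp at hmem
      rw [hlam, hset, Real.sSup_empty, zero_mul]
    · have hbdd : BddAbove {r : ℝ | ∃ i, μ i ≠ (Δ:ℝ) ∧ μ i ≠ -(Δ:ℝ) ∧ r = |μ i|} := by
        refine ⟨(Δ:ℝ), ?_⟩
        rintro r ⟨i, -, -, rfl⟩
        exact eigen_abs_le G Δ hreg (μ i) (fun v => P v i) (hcolne i) (hcol i)
      have hge : ∀ i ∈ F, |μ i| ≤ lam := by
        intro i hi
        rw [hlam]
        exact le_csSup hbdd ⟨i, (hF i hi).1, (hF i hi).2, rfl⟩
      have hlam0 : (0:ℝ) ≤ lam := le_trans (abs_nonneg _) (hge i0 hi0)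
      have hcs : ∑ i ∈ F, |a i| * |b i| ≤ Real.sqrt ((S.card : ℝ) * T.card) := by
        have h1 : (∑ i ∈ F, |a i| * |b i|)^2 ≤ (∑ i ∈ F, |a i|^2) * (∑ i ∈ F, |b i|^2) :=
          Finset.sum_mul_sq_le_sq_mul_sq F _ _
        have h2 : ∑ i ∈ F, |a i|^2 ≤ (S.card : ℝ) := by
          rw [← hParx]
          calc ∑ i ∈ F, |a i|^2 = ∑ i ∈ F, a i ^2 := by simp [sq_abs]
            _ ≤ ∑ i, a i ^2 :=
              Finset.sum_le_sum_of_subset_of_nonneg (Finset.subset_univ _)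
                (fun i _ _ => sq_nonneg _)
        have h3 : ∑ i ∈ F, |b i|^2 ≤ (T.card : ℝ) := by
          rw [← hPary]
          calc ∑ i ∈ F, |b i|^2 = ∑ i ∈ F, b i ^2 := by simp [sq_abs]
            _ ≤ ∑ i, b i ^2 :=
              Finset.sum_le_sum_of_subset_of_nonneg (Finset.subset_univ _)
                (fun i _ _ => sq_nonneg _)
        have h5 : 0 ≤ ∑ i ∈ F, |a i| * |b i| :=
          Finset.sum_nonneg fun i _ => mul_nonneg (abs_nonneg _) (abs_nonneg _)
        have h6 : 0 ≤ ∑ i ∈ F, |b i|^2 := Finset.sum_nonneg fun i _ => sq_nonneg _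
        have h4 : (∑ i ∈ F, |a i| * |b i|)^2 ≤ (S.card : ℝ) * T.card :=
          h1.trans (mul_le_mul h2 h3 h6 (Nat.cast_nonneg _))
        exact (Real.le_sqrt h5 (mul_nonneg (Nat.cast_nonneg _) (Nat.cast_nonneg _))).2 h4
      calc ∑ i ∈ F, μ i * (a i * b i) ≤ ∑ i ∈ F, lam * (|a i| * |b i|) := by
            refine Finset.sum_le_sum fun i hi => ?_
            have habs : μ i * (a i * b i) ≤ |μ i| * (|a i| * |b i|) := by
              calc μ i * (a i * b i) ≤ |μ i * (a i * b i)| := le_abs_self _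
                _ = |μ i| * (|a i| * |b i|) := by rw [abs_mul, abs_mul]
            exact habs.trans (mul_le_mul_of_nonneg_right (hge i hi) (by positivity))
        _ = lam * ∑ i ∈ F, |a i| * |b i| := (Finset.mul_sum _ _ _).symm
        _ ≤ lam * Real.sqrt ((S.card : ℝ) * T.card) := mul_le_mul_of_nonneg_left hcs hlam0
  -- assembly
  rw [hcount, hexp]
  rw [← Finset.sum_filter_add_sum_filter_not Finset.univ (fun i => μ i = (Δ:ℝ))]
  rw [← Finset.sum_filter_add_sum_filter_not (Finset.univ.filter (fun i => ¬ μ i = (Δ:ℝ)))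
    (fun i => μ i = -(Δ:ℝ))]
  have h1 := hplus (Finset.univ.filter (fun i => μ i = (Δ:ℝ)))
    (fun i hi => (Finset.mem_filter.1 hi).2)
  have h2 := hminus ((Finset.univ.filter (fun i => ¬ μ i = (Δ:ℝ))).filter
      (fun i => μ i = -(Δ:ℝ)))
    (fun i hi => (Finset.mem_filter.1 hi).2)
  have h3 := hgood ((Finset.univ.filter (fun i => ¬ μ i = (Δ:ℝ))).filter
      (fun i => ¬ μ i = -(Δ:ℝ))) (fun i hi =>
    ⟨(Finset.mem_filter.1 (Finset.mem_filter.1 hi).1).2, (Finset.mem_filter.1 hi).2⟩)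
    (fun i h1 h2 => by simp [Finset.mem_filter, h1, h2])
  have hKK : K + K = (Δ : ℝ) / (n:ℝ) * S.card * T.card := by
    rw [hK]
    rw [← add_div, div_mul_eq_mul_div, div_mul_eq_mul_div,
      div_eq_div_iff (mul_ne_zero two_ne_zero hnR.ne') hnR.ne']
    ring
  calc _ ≤ K + (K + lam * Real.sqrt ((S.card : ℝ) * T.card)) := by
        gcongr
    _ = (Δ : ℝ) / (n:ℝ) * S.card * T.card + lam * Real.sqrt ((S.card : ℝ) * T.card) := by
        rw [← add_assoc, hKK]
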